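/- arXiv:0909.4937 — 2 statements merged into one kernel-verified Lean document; each statement's English description precedes it below -/
import Mathlib

section
/- (Walnut's estimate.) Let g : ℝ → ℂ be a measurable function with finite Wiener amalgam norm ‖g‖_W, and let a > 0. Then for every finitely supported family of coefficients c : ℤ² → ℂ, the function Σ_{(k,l)∈ℤ²} c_{k,l} π_{(ak,al)} g belongs to L²(ℝ) and ‖Σ_{(k,l)∈ℤ²} c_{k,l} π_{(ak,al)} g‖_{L²(ℝ)} ≤ (1 + a^{−1}) ‖g‖_W (Σ_{(k,l)∈ℤ²} |c_{k,l}|²)^{1/2}. -/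
set_option maxHeartbeats 1000000


open MeasureTheory Complex
open scoped ENNReal NNReal Real
open intervalIntegral

lemma integral_exp_orth (a : ℝ) (ha : 0 < a) (m : ℤ) :
    ∫ t in (0:ℝ)..a⁻¹, Complex.exp (2*Real.pi*Complex.I*((a*m : ℝ):ℂ)*(t:ℂ)) =
      if m = 0 then (a⁻¹ : ℂ) else 0 := by
  have ha' : (a:ℂ) ≠ 0 := by exact_mod_cast ha.ne'
  split_ifs with h
  · simp [h]
  · have hc : (2*(Real.pi:ℂ)*Complex.I*((a*m : ℝ):ℂ) : ℂ) ≠ 0 := by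
      simp [Complex.ext_iff, Real.pi_ne_zero, ha.ne', h, Complex.I_ne_zero]
    have := integral_exp_mul_complex (a := (0:ℝ)) (b := a⁻¹) hc
    rw [show (fun x : ℝ => Complex.exp (2*(Real.pi:ℂ)*Complex.I*((a*m : ℝ):ℂ)*(x:ℂ))) =
      (fun x : ℝ => Complex.exp ((2*(Real.pi:ℂ)*Complex.I*((a*m : ℝ):ℂ))*(x:ℂ))) from rfl] at this
    rw [this]
    have h1 : (2*(Real.pi:ℂ)*Complex.I*((a*m : ℝ):ℂ)) * ((a⁻¹:ℝ):ℂ) = (m:ℂ) * (2*Real.pi*Complex.I) := by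
      push_cast
      field_simp
    rw [h1, Complex.exp_int_mul_two_pi_mul_I]
    simp

lemma ortho {ι : Type*} [DecidableEq ι] (a : ℝ) (ha : 0 < a) (s : Finset ι) (ν : ι → ℤ)
    (hν : Set.InjOn ν s) (d : ι → ℂ) :
    ∫ t in (0:ℝ)..a⁻¹,
        ‖∑ i ∈ s, d i * Complex.exp (2*Real.pi*Complex.I*((a*ν i : ℝ):ℂ)*(t:ℂ))‖^2
      = a⁻¹ * ∑ i ∈ s, ‖d i‖^2 := by
  set m : ℝ → ℂ := fun t => ∑ i ∈ s, d i * Complex.exp (2*Real.pi*Complex.I*((a*ν i : ℝ):ℂ)*(t:ℂ))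
    with hm
  have expand : ∀ t : ℝ, m t * (starRingEnd ℂ) (m t) =
      ∑ i ∈ s, ∑ j ∈ s, (d i * (starRingEnd ℂ) (d j)) *
        Complex.exp (2*Real.pi*Complex.I*((a*((ν i - ν j : ℤ) : ℝ) : ℝ):ℂ)*(t:ℂ)) := by
    intro t
    rw [hm]
    simp only [map_sum, map_mul, Finset.sum_mul_sum, ← Complex.exp_conj]
    refine Finset.sum_congr rfl fun i _ => Finset.sum_congr rfl fun j _ => ?_
    rw [mul_mul_mul_comm, ← Complex.exp_add]
    congr 2
    simp only [map_mul, Complex.conj_I, Complex.conj_ofReal, map_ofNat]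
    push_cast
    ring
  have hint : ∀ i j : ι, IntervalIntegrable (fun t : ℝ => (d i * (starRingEnd ℂ) (d j)) *
      Complex.exp (2*Real.pi*Complex.I*((a*((ν i - ν j : ℤ) : ℝ) : ℝ):ℂ)*(t:ℂ))) volume 0 a⁻¹ := by
    intro i j
    apply Continuous.intervalIntegrable
    fun_prop
  have key : (∫ t in (0:ℝ)..a⁻¹, m t * (starRingEnd ℂ) (m t))
      = ((a⁻¹ : ℝ):ℂ) * ∑ i ∈ s, ((‖d i‖^2 : ℝ):ℂ) := by
    simp only [expand]
    rw [intervalIntegral.integral_finset_sum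
      (fun i _ => by apply Continuous.intervalIntegrable; fun_prop)]
    have : ∀ i ∈ s, (∫ t in (0:ℝ)..a⁻¹, ∑ j ∈ s, (d i * (starRingEnd ℂ) (d j)) *
          Complex.exp (2*Real.pi*Complex.I*((a*((ν i - ν j : ℤ) : ℝ) : ℝ):ℂ)*(t:ℂ)))
        = ((a⁻¹ : ℝ):ℂ) * ((‖d i‖^2 : ℝ):ℂ) := by
      intro i hi
      rw [intervalIntegral.integral_finset_sum (fun j _ => hint i j)]
      have term : ∀ j ∈ s, (∫ t in (0:ℝ)..a⁻¹, (d i * (starRingEnd ℂ) (d j)) *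
            Complex.exp (2*Real.pi*Complex.I*((a*((ν i - ν j : ℤ) : ℝ) : ℝ):ℂ)*(t:ℂ)))
          = if j = i then ((a⁻¹ : ℝ):ℂ) * ((‖d i‖^2 : ℝ):ℂ) else 0 := by
        intro j hj
        rw [intervalIntegral.integral_const_mul, integral_exp_orth a ha (ν i - ν j)]
        by_cases hji : j = i
        · subst hji
          rw [if_pos (sub_self (ν j)), if_pos rfl]
          rw [Complex.mul_conj, Complex.sq_norm]
          push_cast
          ring
        · have hne : ν i - ν j ≠ 0 := fun h0 => hji (hν hj hi (by omega))
          rw [if_neg hne, mul_zero, if_neg hji]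
      rw [Finset.sum_congr rfl term, Finset.sum_ite_eq' s i _]
      simp [hi]
    rw [Finset.sum_congr rfl this, ← Finset.mul_sum]
  have lhs_eq : ((∫ t in (0:ℝ)..a⁻¹, ‖m t‖^2 : ℝ) : ℂ)
      = ∫ t in (0:ℝ)..a⁻¹, m t * (starRingEnd ℂ) (m t) := by
    rw [← intervalIntegral.integral_ofReal]
    refine intervalIntegral.integral_congr fun t _ => ?_
    rw [Complex.mul_conj, Complex.sq_norm]
  have : ((∫ t in (0:ℝ)..a⁻¹, ‖m t‖^2 : ℝ) : ℂ) = ((a⁻¹ * ∑ i ∈ s, ‖d i‖^2 : ℝ) : ℂ) := by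
    rw [lhs_eq, key]; push_cast; ring
  exact Complex.ofReal_inj.mp this

lemma lintegral_Ico_shift (φ : ℝ → ℝ≥0∞) (hφ : Measurable φ) (x y p : ℝ) :
    ∫⁻ t in Set.Ico (x+p) (y+p), φ t = ∫⁻ t in Set.Ico x y, φ (t+p) := by
  have hmp : MeasurePreserving (fun t : ℝ => t + p) volume volume :=
    measurePreserving_add_right volume p
  have h1 : (volume : Measure ℝ).restrict (Set.Ico (x+p) (y+p))
      = ((volume : Measure ℝ).restrict ((fun t : ℝ => t+p) ⁻¹' (Set.Ico (x+p) (y+p)))).map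
        (fun t : ℝ => t+p) := by
    conv_lhs => rw [← hmp.map_eq]
    exact Measure.restrict_map hmp.measurable measurableSet_Ico
  have hpre : (fun t : ℝ => t+p) ⁻¹' (Set.Ico (x+p) (y+p)) = Set.Ico x y := by
    ext t
    simp only [Set.mem_preimage, Set.mem_Ico]
    constructor
    · rintro ⟨ha, hb⟩; exact ⟨by linarith, by linarith⟩
    · rintro ⟨ha, hb⟩; exact ⟨by linarith, by linarith⟩
  rw [h1, hpre, lintegral_map hφ hmp.measurable]

lemma lintegral_Ico_period_eq (φ : ℝ → ℝ≥0∞) (hφ : Measurable φ) (P : ℝ) (hP : 0 < P)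
    (hper : Function.Periodic φ P) (x : ℝ) :
    ∫⁻ t in Set.Ico x (x+P), φ t = ∫⁻ t in Set.Ico 0 P, φ t := by
  obtain ⟨k, z, hxz, hz0, hzP⟩ : ∃ (k : ℤ) (z : ℝ), x = z + k*P ∧ 0 ≤ z ∧ z < P := by
    refine ⟨⌊x/P⌋, x - ⌊x/P⌋*P, by ring, ?_, ?_⟩
    · have h2 : (⌊x/P⌋ : ℝ) ≤ x/P := Int.floor_le _
      have h3 : (⌊x/P⌋ : ℝ) * P ≤ x := by
        have := mul_le_mul_of_nonneg_right h2 hP.le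
        rwa [div_mul_cancel₀ _ hP.ne'] at this
      linarith
    · have h2 : x/P < ⌊x/P⌋ + 1 := Int.lt_floor_add_one _
      have h3 : x < ((⌊x/P⌋ : ℝ) + 1) * P := by
        have := mul_lt_mul_of_pos_right h2 hP
        rwa [div_mul_cancel₀ _ hP.ne'] at this
      nlinarith
  have shift : ∫⁻ t in Set.Ico x (x+P), φ t = ∫⁻ t in Set.Ico z (z+P), φ t := by
    have e1 : Set.Ico x (x+P) = Set.Ico (z + k*P) ((z+P) + k*P) := by
      rw [hxz]; congr 1; ring
    rw [e1, lintegral_Ico_shift φ hφ z (z+P) (k*P)]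
    refine setLIntegral_congr_fun measurableSet_Ico (fun t _ => ?_)
    simpa [mul_comm] using (hper.int_mul k) t
  rw [shift]
  have split1 : ∫⁻ t in Set.Ico z (z+P), φ t
      = (∫⁻ t in Set.Ico z P, φ t) + ∫⁻ t in Set.Ico P (z+P), φ t := by
    rw [← lintegral_union measurableSet_Ico Set.Ico_disjoint_Ico_same]
    congr 1
    rw [Set.Ico_union_Ico_eq_Ico (by linarith) (by linarith)]
  have split2 : ∫⁻ t in Set.Ico (0:ℝ) P, φ t
      = (∫⁻ t in Set.Ico (0:ℝ) z, φ t) + ∫⁻ t in Set.Ico z P, φ t := by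
    rw [← lintegral_union measurableSet_Ico Set.Ico_disjoint_Ico_same]
    congr 1
    rw [Set.Ico_union_Ico_eq_Ico (by linarith) (by linarith)]
  have shift2 : ∫⁻ t in Set.Ico P (z+P), φ t = ∫⁻ t in Set.Ico (0:ℝ) z, φ t := by
    have e2 : Set.Ico P (z+P) = Set.Ico (0+P) (z+P) := by rw [zero_add]
    rw [e2, lintegral_Ico_shift φ hφ 0 z P]
    exact setLIntegral_congr_fun measurableSet_Ico
      (fun t _ => hper t)
  rw [split1, split2, shift2, add_comm]

lemma lintegral_Ico_le_card_mul_period (φ : ℝ → ℝ≥0∞) (hφ : Measurable φ) (P : ℝ) (hP : 0 < P)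
    (hper : Function.Periodic φ P) (x : ℝ) (N : ℕ) (hN : 1 ≤ (N : ℝ) * P) :
    ∫⁻ t in Set.Ico x (x+1), φ t ≤ N * ∫⁻ t in Set.Ico 0 P, φ t := by
  have cover : Set.Ico x (x+1) ⊆ ⋃ j : Fin N, Set.Ico (x + j*P) (x + (j+1)*P) := by
    intro t ht
    obtain ⟨ht1, ht2⟩ := ht
    have hnn : (0:ℝ) ≤ (t-x)/P := div_nonneg (by linarith) hP.le
    have hjN : ⌊(t-x)/P⌋₊ < N := by
      rw [Nat.floor_lt hnn, div_lt_iff₀ hP]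
      nlinarith
    have h2 : (⌊(t-x)/P⌋₊ : ℝ) * P ≤ t - x := by
      have := mul_le_mul_of_nonneg_right (Nat.floor_le hnn) hP.le
      rwa [div_mul_cancel₀ _ hP.ne'] at this
    have h3 : t - x < ((⌊(t-x)/P⌋₊ : ℝ) + 1) * P := by
      have := mul_lt_mul_of_pos_right (Nat.lt_floor_add_one ((t-x)/P)) hP
      rwa [div_mul_cancel₀ _ hP.ne'] at this
    exact Set.mem_iUnion.2 ⟨⟨⌊(t-x)/P⌋₊, hjN⟩, ⟨by push_cast; linarith, by push_cast; linarith⟩⟩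
  calc ∫⁻ t in Set.Ico x (x+1), φ t
      ≤ ∫⁻ t in ⋃ j : Fin N, Set.Ico (x + j*P) (x + (j+1)*P), φ t := lintegral_mono_set cover
    _ ≤ ∑' j : Fin N, ∫⁻ t in Set.Ico (x + j*P) (x + (j+1)*P), φ t := lintegral_iUnion_le _ _
    _ = ∑ j : Fin N, ∫⁻ t in Set.Ico (x + j*P) (x + (j+1)*P), φ t := tsum_fintype _
    _ = ∑ _j : Fin N, ∫⁻ t in Set.Ico 0 P, φ t := by
        refine Finset.sum_congr rfl fun j _ => ?_
        have h1 : x + ((j:ℝ)+1)*P = (x + j*P) + P := by ring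
        rw [h1, lintegral_Ico_period_eq φ hφ P hP hper (x + j*P)]
    _ = N * ∫⁻ t in Set.Ico 0 P, φ t := by
        rw [Finset.sum_const, Finset.card_univ, Fintype.card_fin, nsmul_eq_mul]

lemma enn_sq_rpow (x : ℝ≥0∞) : x ^ (2:ℕ) = x ^ ((2:ℕ):ℝ) := (ENNReal.rpow_natCast x 2).symm

lemma lp2_finset_sum_le {ι : Type*} (s : Finset ι) (φ : ι → ℝ → ℝ≥0∞)
    (hφ : ∀ i, Measurable (φ i)) :
    (∫⁻ t, (∑ i ∈ s, φ i t) ^ (2:ℕ)) ^ (1/2 : ℝ)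
      ≤ ∑ i ∈ s, (∫⁻ t, (φ i t) ^ (2:ℕ)) ^ (1/2 : ℝ) := by
  classical
  simp only [enn_sq_rpow]
  induction s using Finset.induction with
  | empty => simp [ENNReal.zero_rpow_of_pos]
  | @insert i s hni ih =>
    simp only [Finset.sum_insert hni]
    calc (∫⁻ t, (φ i t + ∑ j ∈ s, φ j t) ^ ((2:ℕ):ℝ)) ^ (1/2 : ℝ)
        ≤ (∫⁻ t, (φ i t) ^ ((2:ℕ):ℝ)) ^ (1/2 : ℝ)
            + (∫⁻ t, (∑ j ∈ s, φ j t) ^ ((2:ℕ):ℝ)) ^ (1/2 : ℝ) := by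
          have h12 : (1/2 : ℝ) = 1 / ((2:ℕ):ℝ) := by norm_num
          rw [h12]
          exact ENNReal.lintegral_Lp_add_le (hφ i).aemeasurable
            (Finset.measurable_sum s fun j _ => hφ j).aemeasurable (by norm_num)
      _ ≤ _ := add_le_add_right ih _

lemma lp2_tsum_le (φ : ℤ → ℝ → ℝ≥0∞) (hφ : ∀ n, Measurable (φ n)) :
    (∫⁻ t, (∑' n, φ n t) ^ (2:ℕ)) ^ (1/2 : ℝ)
      ≤ ∑' n, (∫⁻ t, (φ n t) ^ (2:ℕ)) ^ (1/2 : ℝ) := by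
  classical
  set L : ℤ → ℝ≥0∞ := fun n => (∫⁻ t, (φ n t) ^ (2:ℕ)) ^ (1/2 : ℝ) with hL
  have key : (∫⁻ t, (∑' n, φ n t) ^ (2:ℕ)) ≤ (∑' n, L n) ^ (2:ℕ) := by
    have h1 : ∀ t : ℝ, (∑' n, φ n t) ^ (2:ℕ) = ⨆ s : Finset ℤ, (∑ n ∈ s, φ n t) ^ (2:ℕ) := by
      intro t
      rw [ENNReal.tsum_eq_iSup_sum]
      apply le_antisymm
      · rw [sq, ENNReal.iSup_mul]
        refine iSup_le fun s => ?_
        rw [ENNReal.mul_iSup]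
        refine iSup_le fun s' => ?_
        refine le_iSup_of_le (s ∪ s') ?_
        rw [sq]
        exact mul_le_mul'
          (Finset.sum_le_sum_of_subset Finset.subset_union_left)
          (Finset.sum_le_sum_of_subset Finset.subset_union_right)
      · exact iSup_le fun s =>
          pow_le_pow_left' (le_iSup (fun s : Finset ℤ => ∑ n ∈ s, φ n t) s) 2
    have hmeas : ∀ s : Finset ℤ, AEMeasurable (fun t => (∑ n ∈ s, φ n t) ^ (2:ℕ))
        (volume : Measure ℝ) :=
      fun s => ((Finset.measurable_sum s fun j _ => hφ j).pow_const 2).aemeasurable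
    have hdir : Directed (· ≤ ·) (fun s : Finset ℤ => fun t => (∑ n ∈ s, φ n t) ^ (2:ℕ)) := by
      intro s s'
      refine ⟨s ∪ s', fun t => ?_, fun t => ?_⟩
      · exact pow_le_pow_left' (Finset.sum_le_sum_of_subset Finset.subset_union_left) 2
      · exact pow_le_pow_left' (Finset.sum_le_sum_of_subset Finset.subset_union_right) 2
    calc ∫⁻ t, (∑' n, φ n t) ^ (2:ℕ)
        = ∫⁻ t, ⨆ s : Finset ℤ, (∑ n ∈ s, φ n t) ^ (2:ℕ) := lintegral_congr h1
      _ = ⨆ s : Finset ℤ, ∫⁻ t, (∑ n ∈ s, φ n t) ^ (2:ℕ) := lintegral_iSup_directed hmeas hdir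
      _ ≤ (∑' n, L n) ^ (2:ℕ) := by
          refine iSup_le fun s => ?_
          have h2 : (∫⁻ t, (∑ n ∈ s, φ n t) ^ (2:ℕ)) ^ (1/2 : ℝ) ≤ ∑ n ∈ s, L n :=
            lp2_finset_sum_le s φ hφ
          calc ∫⁻ t, (∑ n ∈ s, φ n t) ^ (2:ℕ)
              = (∫⁻ t, (∑ n ∈ s, φ n t) ^ (2:ℕ)) ^ ((1:ℝ)) := by rw [ENNReal.rpow_one]
            _ = ((∫⁻ t, (∑ n ∈ s, φ n t) ^ (2:ℕ)) ^ (1/2 : ℝ)) ^ ((2:ℕ):ℝ) := by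
                rw [← ENNReal.rpow_mul]
                norm_num
            _ ≤ (∑ n ∈ s, L n) ^ ((2:ℕ):ℝ) := ENNReal.rpow_le_rpow h2 (by norm_num)
            _ = (∑ n ∈ s, L n) ^ (2:ℕ) := ENNReal.rpow_natCast _ 2
            _ ≤ (∑' n, L n) ^ (2:ℕ) := pow_le_pow_left' (ENNReal.sum_le_tsum s) 2
  calc (∫⁻ t, (∑' n, φ n t) ^ (2:ℕ)) ^ (1/2 : ℝ)
      ≤ ((∑' n, L n) ^ (2:ℕ)) ^ (1/2 : ℝ) := ENNReal.rpow_le_rpow key (by norm_num)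
    _ = ∑' n, L n := by
        rw [← ENNReal.rpow_natCast _ 2, ← ENNReal.rpow_mul]
        norm_num

lemma sq_sum_nnnorm_le {ι : Type*} (s : Finset ι) (d : ι → ℂ) :
    (∑ i ∈ s, (‖d i‖₊ : ℝ≥0∞)) ^ (2:ℕ)
      ≤ (s.card : ℝ≥0∞) * ∑ i ∈ s, (‖d i‖₊ : ℝ≥0∞) ^ (2:ℕ) := by
  have hreal : (∑ i ∈ s, ‖d i‖) ^ 2 ≤ (s.card : ℝ) * ∑ i ∈ s, ‖d i‖ ^ 2 :=
    sq_sum_le_card_mul_sum_sq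
  have hnn : ((∑ i ∈ s, ‖d i‖₊) ^ 2 : ℝ≥0) ≤ (s.card : ℝ≥0) * ∑ i ∈ s, ‖d i‖₊ ^ 2 := by
    rw [← NNReal.coe_le_coe]
    push_cast
    exact hreal
  calc (∑ i ∈ s, (‖d i‖₊ : ℝ≥0∞)) ^ (2:ℕ) = (((∑ i ∈ s, ‖d i‖₊) ^ 2 : ℝ≥0) : ℝ≥0∞) := by
        push_cast; ring
    _ ≤ (((s.card : ℝ≥0) * ∑ i ∈ s, ‖d i‖₊ ^ 2 : ℝ≥0) : ℝ≥0∞) := by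
        exact_mod_cast ENNReal.coe_le_coe.2 hnn
    _ = (s.card : ℝ≥0∞) * ∑ i ∈ s, (‖d i‖₊ : ℝ≥0∞) ^ (2:ℕ) := by push_cast; ring

lemma card_floor_filter_le (a : ℝ) (ha : 0 < a) (n : ℤ) (t : ℝ) (K : Finset ℤ)
    [DecidablePred fun k : ℤ => ⌊t - a*k⌋ = n] :
    (((K.filter (fun k : ℤ => ⌊t - a*k⌋ = n)).card : ℝ≥0∞)) ≤ ENNReal.ofReal (1 + a⁻¹) := by
  set lo : ℝ := (t - n - 1)/a with hlo
  set hi : ℝ := (t - n)/a with hhi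
  have hsub : K.filter (fun k : ℤ => ⌊t - a*k⌋ = n) ⊆ Finset.Ioc ⌊lo⌋ ⌊hi⌋ := by
    intro k hk
    obtain ⟨-, hk2⟩ := Finset.mem_filter.mp hk
    have h1 : (n:ℝ) ≤ t - a*k := by rw [← hk2]; exact Int.floor_le _
    have h2 : t - a*k < n + 1 := by
      have := Int.lt_floor_add_one (t - a*k)
      rw [hk2] at this
      exact_mod_cast this
    rw [Finset.mem_Ioc]
    constructor
    · rw [Int.floor_lt]
      rw [hlo, div_lt_iff₀ ha]
      nlinarith
    · rw [Int.le_floor]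
      rw [hhi, le_div_iff₀ ha]
      nlinarith
  have hcard : (K.filter (fun k : ℤ => ⌊t - a*k⌋ = n)).card ≤ (⌊hi⌋ - ⌊lo⌋).toNat := by
    have := Finset.card_le_card hsub
    rwa [Int.card_Ioc] at this
  have hreal : ((⌊hi⌋ - ⌊lo⌋).toNat : ℝ) ≤ 1 + a⁻¹ := by
    have hd : (⌊hi⌋ : ℝ) - ⌊lo⌋ ≤ 1 + a⁻¹ := by
      have h1 : (⌊hi⌋ : ℝ) ≤ hi := Int.floor_le hi
      have h2 : lo - 1 < ⌊lo⌋ := by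
        have := Int.lt_floor_add_one lo
        linarith
      have h3 : hi = lo + a⁻¹ := by
        rw [hhi, hlo]
        field_simp
        ring
      linarith
    rcases le_or_gt (⌊hi⌋ - ⌊lo⌋) 0 with h | h
    · have : (⌊hi⌋ - ⌊lo⌋).toNat = 0 := Int.toNat_of_nonpos h
      rw [this]
      simp
      positivity
    · have hcast : ((⌊hi⌋ - ⌊lo⌋).toNat : ℝ) = ((⌊hi⌋ - ⌊lo⌋ : ℤ) : ℝ) := by
        exact_mod_cast congrArg (fun z : ℤ => (z : ℝ)) (Int.toNat_of_nonneg h.le)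
      rw [hcast]
      push_cast
      linarith
  calc ((K.filter (fun k : ℤ => ⌊t - a*k⌋ = n)).card : ℝ≥0∞)
      ≤ (((⌊hi⌋ - ⌊lo⌋).toNat : ℕ) : ℝ≥0∞) := by exact_mod_cast hcard
    _ = ENNReal.ofReal (((⌊hi⌋ - ⌊lo⌋).toNat : ℕ) : ℝ) := (ENNReal.ofReal_natCast _).symm
    _ ≤ ENNReal.ofReal (1 + a⁻¹) := ENNReal.ofReal_le_ofReal hreal

/-- Time-frequency shift: `(π_(x,ξ) f)(t) = e^{2πiξt} f(t-x)`. -/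
noncomputable def tfShift (x ξ : ℝ) (f : ℝ → ℂ) : ℝ → ℂ :=
  fun t => Complex.exp (2 * Real.pi * Complex.I * ξ * t) * f (t - x)

/-- The Wiener amalgam norm `‖g‖_W = Σ_{k∈ℤ} sup_{t∈[0,1]} |g(t+k)|` (valued in `ℝ≥0∞`). -/
noncomputable def wienerNorm (g : ℝ → ℂ) : ℝ≥0∞ :=
  ∑' k : ℤ, ⨆ t : Set.Icc (0 : ℝ) 1, (‖g ((t : ℝ) + (k : ℝ))‖₊ : ℝ≥0∞)

/-- Walnut's estimate: for `g` with finite Wiener amalgam norm and any finitely supported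
family of coefficients, `‖Σ c_{k,l} π_{(ak,al)} g‖_{L²} ≤ (1+a⁻¹) ‖g‖_W (Σ |c_{k,l}|²)^{1/2}`. -/
theorem walnut_estimate (g : ℝ → ℂ) (hg : Measurable g) (hgW : wienerNorm g ≠ ⊤)
    (a : ℝ) (ha : 0 < a) (c : (ℤ × ℤ) →₀ ℂ) :
    MemLp (fun t => ∑ kl ∈ c.support, c kl * tfShift (a * kl.1) (a * kl.2) g t) 2
      (volume : Measure ℝ) ∧
    Real.sqrt (∫ t : ℝ, ‖∑ kl ∈ c.support, c kl * tfShift (a * kl.1) (a * kl.2) g t‖ ^ 2) ≤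
      (1 + a⁻¹) * (wienerNorm g).toReal *
        Real.sqrt (∑ kl ∈ c.support, ‖c kl‖ ^ 2) := by
  classical
  set F : ℝ → ℂ := fun t => ∑ kl ∈ c.support, c kl * tfShift (a * kl.1) (a * kl.2) g t with hF
  set K : Finset ℤ := c.support.image Prod.fst with hK
  set fib : ℤ → Finset (ℤ × ℤ) := fun k => c.support.filter (fun p => p.1 = k) with hfib
  set m : ℤ → ℝ → ℂ := fun k t => ∑ p ∈ fib k,
    c p * Complex.exp (2*Real.pi*Complex.I*((a * (p.2:ℝ) : ℝ):ℂ)*(t:ℂ)) with hm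
  -- regrouping
  have hFg : ∀ t : ℝ, F t = ∑ k ∈ K, m k t * g (t - a * k) := by
    intro t
    have hFt : F t = ∑ kl ∈ c.support, c kl * tfShift (a * kl.1) (a * kl.2) g t := rfl
    rw [hFt, hK, ← Finset.sum_fiberwise_of_maps_to
      (fun p hp => Finset.mem_image_of_mem Prod.fst hp)
      (fun p => c p * tfShift (a * p.1) (a * p.2) g t)]
    refine Finset.sum_congr rfl fun k hk => ?_
    rw [hm, Finset.sum_mul]
    refine Finset.sum_congr rfl fun p hp => ?_
    have hp1 : p.1 = k := (Finset.mem_filter.mp hp).2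
    rw [tfShift, hp1]; ring
  have hmcont : ∀ k : ℤ, Continuous (m k) := by
    intro k
    rw [hm]
    exact continuous_finset_sum _ fun p _ => continuous_const.mul (by fun_prop)
  have hFmeas : Measurable F := by
    rw [hF]
    refine Finset.measurable_sum _ fun p _ => Measurable.const_mul ?_ _
    unfold tfShift
    exact ((Complex.continuous_exp.comp (by fun_prop)).measurable).mul
      (hg.comp (measurable_id.sub_const _))
  set s : ℤ → ℝ≥0∞ := fun n => ⨆ t : Set.Icc (0:ℝ) 1, (‖g ((t:ℝ) + (n:ℝ))‖₊ : ℝ≥0∞) with hs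
  have hsW : ∑' n : ℤ, s n = wienerNorm g := rfl
  set Mk : ℤ → ℝ → ℝ≥0∞ := fun k t => (‖m k t‖₊ : ℝ≥0∞) with hMk
  have hMkmeas : ∀ k, Measurable (Mk k) := fun k =>
    ((hmcont k).measurable.nnnorm).coe_nnreal_ennreal
  set H : ℤ → ℝ → ℝ≥0∞ := fun n t => ∑ k ∈ K, if ⌊t - a*k⌋ = n then Mk k t else 0 with hH
  have hsetIco : ∀ (k n : ℤ), {t : ℝ | ⌊t - a*k⌋ = n} = Set.Ico ((n:ℝ) + a*k) (((n:ℝ) + a*k) + 1) := by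
    intro k n
    ext t
    rw [Set.mem_setOf_eq, Set.mem_Ico, Int.floor_eq_iff]
    constructor
    · rintro ⟨h1, h2⟩; constructor <;> push_cast at * <;> linarith
    · rintro ⟨h1, h2⟩; constructor <;> push_cast at * <;> linarith
  have hsetmeas : ∀ (k n : ℤ), MeasurableSet {t : ℝ | ⌊t - a*k⌋ = n} := by
    intro k n; rw [hsetIco]; exact measurableSet_Ico
  have hHmeas : ∀ n, Measurable (H n) := by
    intro n
    rw [hH]
    refine Finset.measurable_sum _ fun k _ => Measurable.ite (hsetmeas k n) (hMkmeas k)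
      measurable_const
  -- pointwise bound of g by the Wiener sup
  have hgs : ∀ u : ℝ, (‖g u‖₊ : ℝ≥0∞) ≤ s ⌊u⌋ := by
    intro u
    have hu : u - (⌊u⌋ : ℝ) ∈ Set.Icc (0:ℝ) 1 :=
      ⟨by linarith [Int.floor_le u], by linarith [(Int.lt_floor_add_one u).le]⟩
    have := le_iSup (fun t : Set.Icc (0:ℝ) 1 => (‖g ((t:ℝ) + (⌊u⌋:ℝ))‖₊ : ℝ≥0∞)) ⟨u - ⌊u⌋, hu⟩
    simpa using this
  -- pointwise domination
  have hdom : ∀ t : ℝ, (‖F t‖₊ : ℝ≥0∞) ≤ ∑' n : ℤ, s n * H n t := by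
    intro t
    calc (‖F t‖₊ : ℝ≥0∞) = (‖∑ k ∈ K, m k t * g (t - a * k)‖₊ : ℝ≥0∞) := by rw [hFg t]
      _ ≤ ∑ k ∈ K, (‖m k t * g (t - a * k)‖₊ : ℝ≥0∞) := by
          exact_mod_cast ENNReal.coe_le_coe.2 (nnnorm_sum_le K (fun k => m k t * g (t - a * k)))
      _ = ∑ k ∈ K, Mk k t * (‖g (t - a * k)‖₊ : ℝ≥0∞) := by
          refine Finset.sum_congr rfl fun k _ => ?_
          rw [hMk, nnnorm_mul]; push_cast; ring
      _ ≤ ∑ k ∈ K, Mk k t * s ⌊t - a*k⌋ :=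
          Finset.sum_le_sum fun k _ => mul_le_mul_right (hgs _) _
      _ = ∑ k ∈ K, ∑' n : ℤ, s n * (if ⌊t - a*k⌋ = n then Mk k t else 0) := by
          refine Finset.sum_congr rfl fun k _ => ?_
          rw [tsum_eq_single (⌊t - a*k⌋) (fun n hn => by
            rw [if_neg (fun h => hn h.symm), mul_zero])]
          rw [if_pos rfl, mul_comm]
      _ = ∑' n : ℤ, ∑ k ∈ K, s n * (if ⌊t - a*k⌋ = n then Mk k t else 0) := by
          rw [Summable.tsum_finsetSum (fun k _ => ENNReal.summable)]
      _ = ∑' n : ℤ, s n * H n t := by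
          refine tsum_congr fun n => ?_
          rw [hH, Finset.mul_sum]
  -- periodicity of |m k|^2
  have ha' : (a:ℂ) ≠ 0 := by exact_mod_cast ha.ne'
  have hmper : ∀ (k : ℤ) (t : ℝ), m k (t + a⁻¹) = m k t := by
    intro k t
    rw [hm]
    refine Finset.sum_congr rfl fun p _ => ?_
    congr 1
    have e : (2*(Real.pi:ℂ)*Complex.I*((a * (p.2:ℝ) : ℝ):ℂ)*((t + a⁻¹ : ℝ):ℂ))
        = 2*(Real.pi:ℂ)*Complex.I*((a * (p.2:ℝ) : ℝ):ℂ)*(t:ℂ) + (p.2:ℂ) * (2*Real.pi*Complex.I) := by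
      push_cast
      field_simp
    rw [e, Complex.exp_add, Complex.exp_int_mul_two_pi_mul_I, mul_one]
  have hperiod : ∀ k : ℤ, Function.Periodic (fun t => (Mk k t)^(2:ℕ)) a⁻¹ := by
    intro k t
    simp only [hMk, hmper k t]
  -- value of the period integral
  have hIco0 : ∀ k : ℤ, (∫⁻ t in Set.Ico (0:ℝ) a⁻¹, (Mk k t)^(2:ℕ))
      = ENNReal.ofReal (a⁻¹ * ∑ p ∈ fib k, ‖c p‖^2) := by
    intro k
    have hinj : Set.InjOn (fun p : ℤ×ℤ => p.2) (fib k) := by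
      intro p hp q hq h2
      have hp1 : p.1 = k := (Finset.mem_filter.mp (Finset.mem_coe.mp hp)).2
      have hq1 : q.1 = k := (Finset.mem_filter.mp (Finset.mem_coe.mp hq)).2
      exact Prod.ext (hp1.trans hq1.symm) h2
    have hptw : ∀ t : ℝ, (Mk k t)^(2:ℕ) = ENNReal.ofReal (‖m k t‖^2) := by
      intro t
      have hMkkt : Mk k t = (‖m k t‖₊ : ℝ≥0∞) := rfl
      rw [hMkkt, ← ENNReal.ofReal_coe_nnreal, coe_nnnorm, ← ENNReal.ofReal_pow (norm_nonneg _)]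
    simp only [hptw]
    rw [Measure.restrict_congr_set Ico_ae_eq_Ioc]
    have hint : Integrable (fun t => ‖m k t‖^2) ((volume : Measure ℝ).restrict (Set.Ioc 0 a⁻¹)) := by
      have : IntegrableOn (fun t => ‖m k t‖^2) (Set.Icc (0:ℝ) a⁻¹) volume :=
        (((hmcont k).norm.pow 2).continuousOn).integrableOn_compact isCompact_Icc
      exact this.mono_set Set.Ioc_subset_Icc_self
    rw [← ofReal_integral_eq_lintegral_ofReal hint
      (Filter.Eventually.of_forall fun t => sq_nonneg _)]
    congr 1
    rw [← intervalIntegral.integral_of_le (by positivity : (0:ℝ) ≤ a⁻¹)]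
    exact ortho a ha (fib k) (fun p => p.2) hinj c
  -- per (n,k) integral bound
  have hIntk : ∀ (n k : ℤ), (∫⁻ t, if ⌊t - a*k⌋ = n then (Mk k t)^(2:ℕ) else 0)
      ≤ ENNReal.ofReal (1+a⁻¹) * ∑ p ∈ fib k, (‖c p‖₊ : ℝ≥0∞)^(2:ℕ) := by
    intro n k
    have h1 : (∫⁻ t, if ⌊t - a*k⌋ = n then (Mk k t)^(2:ℕ) else 0)
        = ∫⁻ t in {t : ℝ | ⌊t - a*k⌋ = n}, (Mk k t)^(2:ℕ) := by
      rw [← lintegral_indicator (hsetmeas k n)]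
      refine lintegral_congr fun t => ?_
      rw [Set.indicator_apply]
      rfl
    have hN1 : (1:ℝ) ≤ (⌈a⌉₊ : ℝ) * a⁻¹ := by
      have h := mul_le_mul_of_nonneg_right (Nat.le_ceil a) (inv_nonneg.mpr ha.le)
      rwa [mul_inv_cancel₀ ha.ne'] at h
    have hS : (0:ℝ) ≤ ∑ p ∈ fib k, ‖c p‖^2 := Finset.sum_nonneg fun p _ => sq_nonneg _
    calc (∫⁻ t, if ⌊t - a*k⌋ = n then (Mk k t)^(2:ℕ) else 0)
        = ∫⁻ t in Set.Ico ((n:ℝ) + a*k) (((n:ℝ) + a*k) + 1), (Mk k t)^(2:ℕ) := by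
          rw [h1, hsetIco k n]
      _ ≤ ⌈a⌉₊ * ∫⁻ t in Set.Ico (0:ℝ) a⁻¹, (Mk k t)^(2:ℕ) :=
          lintegral_Ico_le_card_mul_period _ ((hMkmeas k).pow_const 2) a⁻¹ (by positivity)
            (hperiod k) _ ⌈a⌉₊ hN1
      _ = ⌈a⌉₊ * ENNReal.ofReal (a⁻¹ * ∑ p ∈ fib k, ‖c p‖^2) := by rw [hIco0 k]
      _ = ENNReal.ofReal ((⌈a⌉₊:ℝ) * (a⁻¹ * ∑ p ∈ fib k, ‖c p‖^2)) := by
          rw [← ENNReal.ofReal_natCast, ← ENNReal.ofReal_mul (by positivity)]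
      _ ≤ ENNReal.ofReal ((1+a⁻¹) * ∑ p ∈ fib k, ‖c p‖^2) := by
          apply ENNReal.ofReal_le_ofReal
          have hca : (⌈a⌉₊:ℝ) * a⁻¹ ≤ 1 + a⁻¹ := by
            have h0 := (Nat.ceil_lt_add_one ha.le).le
            have h2 := mul_le_mul_of_nonneg_right h0 (inv_nonneg.mpr ha.le)
            rw [add_mul, mul_inv_cancel₀ ha.ne', one_mul] at h2
            linarith
          nlinarith [hca, hS]
      _ = ENNReal.ofReal (1+a⁻¹) * ∑ p ∈ fib k, (‖c p‖₊ : ℝ≥0∞)^(2:ℕ) := by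
          rw [ENNReal.ofReal_mul (by positivity),
            ENNReal.ofReal_sum_of_nonneg (fun p _ => sq_nonneg _)]
          congr 1
          refine Finset.sum_congr rfl fun p _ => ?_
          rw [← ENNReal.ofReal_coe_nnreal, coe_nnnorm, ← ENNReal.ofReal_pow (norm_nonneg _)]
  -- per-n L² bound
  have hHn : ∀ n : ℤ, (∫⁻ t, (H n t)^(2:ℕ))
      ≤ (ENNReal.ofReal (1+a⁻¹))^(2:ℕ) * ∑ p ∈ c.support, (‖c p‖₊:ℝ≥0∞)^(2:ℕ) := by
    intro n
    have hitemeas : ∀ k : ℤ, Measurable (fun t : ℝ => if ⌊t - a*k⌋ = n then (Mk k t)^(2:ℕ) else 0) :=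
      fun k => Measurable.ite (hsetmeas k n) ((hMkmeas k).pow_const 2) measurable_const
    have hpt : ∀ t : ℝ, (H n t)^(2:ℕ)
        ≤ ENNReal.ofReal (1+a⁻¹) * ∑ k ∈ K, (if ⌊t - a*k⌋ = n then (Mk k t)^(2:ℕ) else 0) := by
      intro t
      have e1 : H n t = ∑ k ∈ K.filter (fun k : ℤ => ⌊t - a*(k:ℝ)⌋ = n), (‖m k t‖₊:ℝ≥0∞) := by
        rw [hH, Finset.sum_filter]
      have e2 : ∑ k ∈ K, (if ⌊t - a*k⌋ = n then (Mk k t)^(2:ℕ) else 0)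
          = ∑ k ∈ K.filter (fun k : ℤ => ⌊t - a*(k:ℝ)⌋ = n), (‖m k t‖₊:ℝ≥0∞)^(2:ℕ) := by
        rw [Finset.sum_filter]
      rw [e1, e2]
      calc (∑ k ∈ K.filter (fun k : ℤ => ⌊t - a*(k:ℝ)⌋ = n), (‖m k t‖₊:ℝ≥0∞))^(2:ℕ)
          ≤ ((K.filter (fun k : ℤ => ⌊t - a*(k:ℝ)⌋ = n)).card : ℝ≥0∞)
              * ∑ k ∈ K.filter (fun k : ℤ => ⌊t - a*(k:ℝ)⌋ = n), (‖m k t‖₊:ℝ≥0∞)^(2:ℕ) :=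
            sq_sum_nnnorm_le _ _
        _ ≤ ENNReal.ofReal (1+a⁻¹)
              * ∑ k ∈ K.filter (fun k : ℤ => ⌊t - a*(k:ℝ)⌋ = n), (‖m k t‖₊:ℝ≥0∞)^(2:ℕ) :=
            mul_le_mul_left (card_floor_filter_le a ha n t K) _
    calc ∫⁻ t, (H n t)^(2:ℕ)
        ≤ ∫⁻ t, ENNReal.ofReal (1+a⁻¹)
            * ∑ k ∈ K, (if ⌊t - a*k⌋ = n then (Mk k t)^(2:ℕ) else 0) := lintegral_mono hpt
      _ = ENNReal.ofReal (1+a⁻¹)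
            * ∑ k ∈ K, ∫⁻ t, (if ⌊t - a*k⌋ = n then (Mk k t)^(2:ℕ) else 0) := by
          rw [lintegral_const_mul _ (Finset.measurable_sum _ fun k _ => hitemeas k),
            lintegral_finset_sum _ (fun k _ => hitemeas k)]
      _ ≤ ENNReal.ofReal (1+a⁻¹)
            * ∑ k ∈ K, (ENNReal.ofReal (1+a⁻¹) * ∑ p ∈ fib k, (‖c p‖₊:ℝ≥0∞)^(2:ℕ)) :=
          mul_le_mul_right (Finset.sum_le_sum fun k _ => hIntk n k) _
      _ = (ENNReal.ofReal (1+a⁻¹))^(2:ℕ) * ∑ p ∈ c.support, (‖c p‖₊:ℝ≥0∞)^(2:ℕ) := by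
          rw [← Finset.mul_sum, hK]
          rw [Finset.sum_fiberwise_of_maps_to (fun p hp => Finset.mem_image_of_mem Prod.fst hp)
            (fun p => (‖c p‖₊:ℝ≥0∞)^(2:ℕ))]
          ring
  -- assemble
  set C2 : ℝ≥0∞ := ∑ p ∈ c.support, (‖c p‖₊:ℝ≥0∞)^(2:ℕ) with hC2
  have hC2top : C2 ≠ ⊤ := by
    rw [hC2]
    exact (ENNReal.sum_lt_top.mpr fun p _ => ENNReal.pow_lt_top ENNReal.coe_lt_top).ne
  have hmain : (∫⁻ t, ((‖F t‖₊:ℝ≥0∞))^(2:ℕ))^(1/2:ℝ)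
      ≤ wienerNorm g * (ENNReal.ofReal (1+a⁻¹) * C2^(1/2:ℝ)) := by
    have hb : ∀ n : ℤ, (∫⁻ t, (s n * H n t)^(2:ℕ))^(1/2:ℝ)
        ≤ s n * (ENNReal.ofReal (1+a⁻¹) * C2^(1/2:ℝ)) := by
      intro n
      have e1 : ∀ t:ℝ, (s n * H n t)^(2:ℕ) = (s n)^(2:ℕ) * (H n t)^(2:ℕ) := fun t => mul_pow _ _ 2
      calc (∫⁻ t, (s n * H n t)^(2:ℕ))^(1/2:ℝ)
          = ((s n)^(2:ℕ) * ∫⁻ t, (H n t)^(2:ℕ))^(1/2:ℝ) := by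
            simp only [e1]
            rw [lintegral_const_mul _ ((hHmeas n).pow_const 2)]
        _ = s n * (∫⁻ t, (H n t)^(2:ℕ))^(1/2:ℝ) := by
            rw [ENNReal.mul_rpow_of_nonneg _ _ (by norm_num : (0:ℝ) ≤ 1/2),
              ← ENNReal.rpow_natCast (s n) 2, ← ENNReal.rpow_mul]
            norm_num
        _ ≤ s n * ((ENNReal.ofReal (1+a⁻¹))^(2:ℕ) * C2)^(1/2:ℝ) :=
            mul_le_mul_right (ENNReal.rpow_le_rpow (hHn n) (by norm_num)) _
        _ = s n * (ENNReal.ofReal (1+a⁻¹) * C2^(1/2:ℝ)) := by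
            rw [ENNReal.mul_rpow_of_nonneg _ _ (by norm_num : (0:ℝ) ≤ 1/2),
              ← ENNReal.rpow_natCast (ENNReal.ofReal (1+a⁻¹)) 2, ← ENNReal.rpow_mul]
            norm_num
    calc (∫⁻ t, ((‖F t‖₊:ℝ≥0∞))^(2:ℕ))^(1/2:ℝ)
        ≤ (∫⁻ t, (∑' n : ℤ, s n * H n t)^(2:ℕ))^(1/2:ℝ) := by
          apply ENNReal.rpow_le_rpow _ (by norm_num : (0:ℝ) ≤ 1/2)
          exact lintegral_mono fun t => pow_le_pow_left' (hdom t) 2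
      _ ≤ ∑' n : ℤ, (∫⁻ t, (s n * H n t)^(2:ℕ))^(1/2:ℝ) :=
          lp2_tsum_le _ (fun n => measurable_const.mul (hHmeas n))
      _ ≤ ∑' n : ℤ, s n * (ENNReal.ofReal (1+a⁻¹) * C2^(1/2:ℝ)) := ENNReal.tsum_le_tsum hb
      _ = wienerNorm g * (ENNReal.ofReal (1+a⁻¹) * C2^(1/2:ℝ)) := by
          rw [ENNReal.tsum_mul_right, hsW]
  have hRtop : wienerNorm g * (ENNReal.ofReal (1+a⁻¹) * C2^(1/2:ℝ)) ≠ ⊤ :=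
    ENNReal.mul_ne_top hgW (ENNReal.mul_ne_top ENNReal.ofReal_ne_top
      (ENNReal.rpow_ne_top_of_nonneg (by norm_num) hC2top))
  have heLp : eLpNorm F 2 volume = (∫⁻ t, ((‖F t‖₊:ℝ≥0∞))^(2:ℕ))^(1/2:ℝ) := by
    have h2 : (2:ℝ≥0∞).toReal = (2:ℝ) := by norm_num
    rw [eLpNorm_eq_lintegral_rpow_enorm_toReal two_ne_zero ENNReal.ofNat_ne_top, h2]
    congr 1
    apply lintegral_congr
    intro t
    rw [← ENNReal.rpow_natCast]
    norm_num
    rfl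
  have hMem : MemLp F 2 volume := by
    constructor
    · exact hFmeas.aestronglyMeasurable
    · rw [heLp]
      exact lt_of_le_of_lt hmain (lt_top_iff_ne_top.2 hRtop)
  refine ⟨hMem, ?_⟩
  have hXint : ∫ t : ℝ, ‖F t‖^2 = (∫⁻ t, ((‖F t‖₊:ℝ≥0∞))^(2:ℕ)).toReal := by
    rw [integral_eq_lintegral_of_nonneg_ae (Filter.Eventually.of_forall fun t => sq_nonneg (‖F t‖))
      ((hFmeas.norm.pow_const 2).aestronglyMeasurable)]
    congr 1
    apply lintegral_congr
    intro t
    rw [← ENNReal.ofReal_coe_nnreal, coe_nnnorm, ← ENNReal.ofReal_pow (norm_nonneg _)]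
  have hsqrt : Real.sqrt (∫ t : ℝ, ‖F t‖^2)
      = ((∫⁻ t, ((‖F t‖₊:ℝ≥0∞))^(2:ℕ))^(1/2:ℝ)).toReal := by
    rw [hXint, Real.sqrt_eq_rpow, ENNReal.toReal_rpow]
  rw [hsqrt]
  have hfinal := ENNReal.toReal_mono hRtop hmain
  refine le_trans hfinal ?_
  rw [ENNReal.toReal_mul, ENNReal.toReal_mul, ENNReal.toReal_ofReal (by positivity)]
  have hC2r : (C2^(1/2:ℝ)).toReal = Real.sqrt (∑ p ∈ c.support, ‖c p‖^2) := by
    have hC2real : C2.toReal = ∑ p ∈ c.support, ‖c p‖^2 := by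
      rw [hC2, ENNReal.toReal_sum (fun p _ => ENNReal.pow_ne_top ENNReal.coe_ne_top)]
      refine Finset.sum_congr rfl fun p _ => ?_
      rw [ENNReal.toReal_pow, ENNReal.coe_toReal, coe_nnnorm]
    rw [← ENNReal.toReal_rpow, hC2real, ← Real.sqrt_eq_rpow]
  rw [hC2r]
  exact le_of_eq (by ring)
end

section
/- For every R > 0 and every z ∈ ℂ, the function ζ ↦ log|1 − z/ζ| is integrable over the disc {|ζ| < R} with respect to Lebesgue measure m on ℂ, and u_R(z) := ∫_{|ζ|<R} log|1 − z/ζ| dm(ζ) equals (π/2)|z|² when |z| ≤ R, and equals πR² log|z| − πR² log R + (π/2)R² when |z| > R. Moreover u_R(z) < (π/2)|z|² for all |z| > R. -/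
open MeasureTheory Complex

/-- The integrand `ζ ↦ log|1 - z/ζ| = log|ζ - z| - log|ζ|`. -/
noncomputable def logFactor (z ζ : ℂ) : ℝ :=
  Real.log (‖ζ - z‖) - Real.log (‖ζ‖)

section Aux
open intervalIntegral
open scoped Real

lemma abs_one_sub_pos {a w : ℂ} (ha : ‖a‖ < 1) (hw : ‖w‖ = 1) :
    0 < ‖1 - a * w‖ := by
  have h : ‖a * w‖ < 1 := by rw [norm_mul, hw, mul_one]; exact ha
  have h1 : a * w ≠ 1 := by intro h1; rw [h1] at h; simp at h
  have : (1 : ℂ) - a * w ≠ 0 := sub_ne_zero.mpr (Ne.symm h1)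
  exact norm_pos_iff.mpr this

lemma circle_log_zero {a : ℂ} (ha : ‖a‖ < 1) :
    ∫ θ in (0:ℝ)..(2*π), Real.log (‖1 - a * Complex.exp (θ * I)‖) = 0 := by
  set g : ℂ → ℂ := fun w => Complex.log (1 - a * w) with hg
  have hdiff : ∀ w ∈ Metric.closedBall (0:ℂ) 1, DifferentiableAt ℂ g w := by
    intro w hw
    have hw1 : ‖w‖ ≤ 1 := by simpa [Complex.dist_eq] using hw
    have hlt : ‖a * w‖ < 1 := by
      rw [norm_mul]
      calc ‖a‖ * ‖w‖ ≤ ‖a‖ * 1 :=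
            mul_le_mul_of_nonneg_left hw1 (norm_nonneg a)
        _ < 1 := by simpa using ha
    have hre : (a * w).re < 1 :=
      lt_of_le_of_lt (le_trans (le_abs_self _) (Complex.abs_re_le_norm (a * w))) hlt
    have hslit : (1 - a * w) ∈ Complex.slitPlane := by
      left; simp only [Complex.sub_re, Complex.one_re]; linarith
    exact (Complex.differentiableAt_log hslit).comp (f := fun w : ℂ => 1 - a * w) w (by fun_prop)
  have hcauchy := Complex.circleIntegral_sub_center_inv_smul_of_differentiable_on_off_countable
      (f := g) (c := 0) (R := 1) one_pos Set.countable_empty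
      (fun w hw => (hdiff w hw).continuousAt.continuousWithinAt)
      (fun w hw => hdiff w (Metric.ball_subset_closedBall hw.1))
  have hg0 : g 0 = 0 := by simp [hg]
  rw [hg0, smul_zero, circleIntegral] at hcauchy
  have hint : ∀ θ : ℝ, deriv (circleMap 0 1) θ • (circleMap 0 1 θ - 0)⁻¹ • g (circleMap 0 1 θ)
      = I * g (circleMap 0 1 θ) := by
    intro θ
    have hne : circleMap 0 1 θ ≠ 0 := circleMap_ne_center one_ne_zero
    rw [deriv_circleMap]
    simp only [smul_eq_mul, sub_zero]
    field_simp
  simp only [hint] at hcauchy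
  rw [intervalIntegral.integral_const_mul] at hcauchy
  have hzero : (∫ θ in (0:ℝ)..(2*π), g (circleMap 0 1 θ)) = 0 := by
    rcases mul_eq_zero.1 hcauchy with h | h
    · exact absurd h I_ne_zero
    · exact h
  have hcont : Continuous fun θ : ℝ => g (circleMap 0 1 θ) := by
    rw [continuous_iff_continuousAt]
    intro θ
    exact ((hdiff _ (circleMap_mem_closedBall 0 zero_le_one θ)).continuousAt).comp
      (continuous_circleMap 0 1).continuousAt
  have h2π : (0:ℝ) ≤ 2*π := by positivity
  rw [intervalIntegral.integral_of_le h2π] at hzero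
  rw [intervalIntegral.integral_of_le h2π]
  have hieq : ∀ θ : ℝ, Real.log (‖1 - a * Complex.exp (θ * I)‖)
      = (g (circleMap 0 1 θ)).re := by
    intro θ
    rw [hg]
    simp only [circleMap_zero, Complex.ofReal_one, one_mul]
    rw [Complex.log_re]
  simp only [hieq]
  have hI : IntegrableOn (fun θ => g (circleMap 0 1 θ)) (Set.Ioc 0 (2*π)) :=
    hcont.integrableOn_Ioc
  have h := integral_re hI
  rw [hzero] at h
  simpa using h

lemma cont_log_abs_one_sub {a : ℂ} (ha : ‖a‖ < 1) :
    Continuous fun θ : ℝ => Real.log (‖1 - a * Complex.exp (θ * I)‖) := by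
  have hc : Continuous fun θ : ℝ => ‖1 - a * Complex.exp ((θ:ℂ) * I)‖ :=
    continuous_norm.comp (by fun_prop)
  exact hc.log fun θ => (abs_one_sub_pos ha (Complex.norm_exp_ofReal_mul_I θ)).ne'

lemma circle_log_aux {r c : ℝ} {z : ℂ} {a : ℂ} (ha : ‖a‖ < 1) (hc : 0 < c)
    (h : ∀ θ : ℝ, ‖circleMap 0 r θ - z‖
      = c * ‖1 - a * Complex.exp (θ * I)‖) :
    ∫ θ in (0:ℝ)..(2*π), Real.log (‖circleMap 0 r θ - z‖)
      = 2*π*Real.log c := by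
  have hpos : ∀ θ : ℝ, 0 < ‖1 - a * Complex.exp ((θ:ℂ) * I)‖ :=
    fun θ => abs_one_sub_pos ha (Complex.norm_exp_ofReal_mul_I θ)
  have hcongr : ∀ θ ∈ Set.uIcc (0:ℝ) (2*π),
      Real.log (‖circleMap 0 r θ - z‖)
        = Real.log c + Real.log (‖1 - a * Complex.exp ((θ:ℂ) * I)‖) := by
    intro θ _
    rw [h θ, Real.log_mul hc.ne' (hpos θ).ne']
  rw [intervalIntegral.integral_congr hcongr]
  rw [intervalIntegral.integral_add intervalIntegrable_const
      ((cont_log_abs_one_sub ha).intervalIntegrable _ _)]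
  rw [circle_log_zero ha]
  simp

lemma circle_log_avg {r : ℝ} (hr : 0 < r) {z : ℂ} (hne : r ≠ ‖z‖) :
    ∫ θ in (0:ℝ)..(2*π), Real.log (‖circleMap 0 r θ - z‖)
      = 2*π*Real.log (max r (‖z‖)) := by
  rcases hne.lt_or_gt with hlt | hgt
  · -- r < |z|
    have hz0 : z ≠ 0 := by
      intro h; rw [h] at hlt; simp at hlt; linarith
    have habs : 0 < ‖z‖ := lt_trans hr hlt
    set a : ℂ := (r:ℂ)/z with ha_def
    have ha : ‖a‖ < 1 := by
      rw [ha_def, norm_div, Complex.norm_real, Real.norm_eq_abs, abs_of_pos hr, div_lt_one habs]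
      exact hlt
    rw [max_eq_right hlt.le]
    apply circle_log_aux ha habs
    intro θ
    have : circleMap 0 r θ - z = -(z * (1 - a * Complex.exp ((θ:ℂ) * I))) := by
      rw [circleMap_zero, ha_def]
      field_simp
      ring
    rw [this, norm_neg, norm_mul]
  · -- |z| < r
    set a : ℂ := (starRingEnd ℂ) z / r with ha_def
    have hr' : (r:ℂ) ≠ 0 := Complex.ofReal_ne_zero.mpr hr.ne'
    have ha : ‖a‖ < 1 := by
      rw [ha_def, norm_div, Complex.norm_conj, Complex.norm_real, Real.norm_eq_abs, abs_of_pos hr,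
        div_lt_one hr]
      exact hgt
    rw [max_eq_left hgt.le]
    apply circle_log_aux ha hr
    intro θ
    have hexp : Complex.exp (-(θ:ℂ)*I) * Complex.exp ((θ:ℂ)*I) = 1 := by
      rw [← Complex.exp_add]
      ring_nf
      exact Complex.exp_zero
    calc ‖circleMap 0 r θ - z‖
        = ‖(starRingEnd ℂ) (circleMap 0 r θ - z)‖ := (Complex.norm_conj _).symm
      _ = ‖Complex.exp (-(θ:ℂ)*I) * ((r:ℂ) * (1 - a * Complex.exp ((θ:ℂ)*I)))‖ := by
          congr 1
          rw [circleMap_zero, map_sub, map_mul, Complex.conj_ofReal]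
          have hconjexp : (starRingEnd ℂ) (Complex.exp ((θ:ℂ)*I)) = Complex.exp (-(θ:ℂ)*I) := by
            rw [← Complex.exp_conj]
            simp [Complex.conj_I, Complex.conj_ofReal]
          rw [hconjexp, ha_def]
          field_simp
          simp only [← neg_mul]
          linear_combination (starRingEnd ℂ) z * hexp
      _ = r * ‖1 - a * Complex.exp ((θ:ℂ)*I)‖ := by
          rw [norm_mul, norm_mul]
          have : Complex.exp (-(θ:ℂ)*I) = Complex.exp (((-θ:ℝ):ℂ)*I) := by push_cast; ring_nf
          rw [this, Complex.norm_exp_ofReal_mul_I, Complex.norm_real, Real.norm_eq_abs, abs_of_pos hr, one_mul]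

lemma polar_det (p : ℝ × ℝ) :
    (LinearMap.toContinuousLinearMap (Matrix.toLin (Module.Basis.finTwoProd ℝ) (Module.Basis.finTwoProd ℝ)
      !![Real.cos p.2, -p.1 * Real.sin p.2; Real.sin p.2, p.1 * Real.cos p.2])).det = p.1 := by
  conv_rhs => rw [← one_mul p.1, ← Real.cos_sq_add_sin_sq p.2]
  simp only [neg_mul, LinearMap.det_toContinuousLinearMap, LinearMap.det_toLin,
    Matrix.det_fin_two_of, sub_neg_eq_add]
  ring

lemma integrable_polar_iff (f : ℂ → ℝ) :
    Integrable f volume ↔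
      IntegrableOn (fun p : ℝ × ℝ => p.1 • f (Complex.polarCoord.symm p))
        polarCoord.target volume := by
  rw [← (Complex.volume_preserving_equiv_real_prod.symm).integrable_comp_emb
      Complex.measurableEquivRealProd.symm.measurableEmbedding]
  calc Integrable (f ∘ Complex.measurableEquivRealProd.symm) volume
      ↔ IntegrableOn (f ∘ Complex.measurableEquivRealProd.symm) polarCoord.source volume := by
        rw [IntegrableOn, Measure.restrict_congr_set polarCoord_source_ae_eq_univ,
          Measure.restrict_univ]
    _ ↔ IntegrableOn (f ∘ Complex.measurableEquivRealProd.symm)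
          (polarCoord.symm '' polarCoord.target) volume := by
        rw [polarCoord.symm_image_target_eq_source]
    _ ↔ IntegrableOn (fun p : ℝ × ℝ =>
          |(LinearMap.toContinuousLinearMap (Matrix.toLin (Module.Basis.finTwoProd ℝ)
            (Module.Basis.finTwoProd ℝ)
            !![Real.cos p.2, -p.1 * Real.sin p.2; Real.sin p.2, p.1 * Real.cos p.2])).det| •
          (f ∘ Complex.measurableEquivRealProd.symm) (polarCoord.symm p))
          polarCoord.target volume :=
        integrableOn_image_iff_integrableOn_abs_det_fderiv_smul volume
          polarCoord.open_target.measurableSet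
          (fun p _ => (hasFDerivAt_polarCoord_symm p).hasFDerivWithinAt) polarCoord.symm.injOn
          (f ∘ Complex.measurableEquivRealProd.symm)
    _ ↔ IntegrableOn (fun p : ℝ × ℝ => p.1 • f (Complex.polarCoord.symm p))
          polarCoord.target volume := by
        apply integrableOn_congr_fun _ polarCoord.open_target.measurableSet
        intro p hp
        have hp1 : 0 < p.1 := by
          rw [polarCoord_target] at hp
          exact hp.1
        simp only [polar_det, Function.comp_apply, abs_of_pos hp1]
        rfl

lemma integrableOn_log_abs_ball {S : ℝ} (hS : 0 < S) :
    IntegrableOn (fun ζ : ℂ => Real.log (‖ζ‖)) (Metric.ball 0 S) volume := by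
  rw [← integrable_indicator_iff measurableSet_ball, integrable_polar_iff]
  have hsub : (Set.Ioo (0:ℝ) S ×ˢ Set.Ioo (-π) π) ⊆ polarCoord.target := by
    rw [polarCoord_target]
    exact Set.prod_mono (Set.Ioo_subset_Ioi_self) le_rfl
  have heq : Set.EqOn
      (fun p : ℝ × ℝ => p.1 • (Metric.ball (0:ℂ) S).indicator
        (fun ζ => Real.log (‖ζ‖)) (Complex.polarCoord.symm p))
      ((Set.Ioo (0:ℝ) S ×ˢ Set.Ioo (-π) π).indicator
        (fun p : ℝ × ℝ => p.1 * Real.log p.1)) polarCoord.target := by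
    intro p hp
    rw [polarCoord_target] at hp
    have hp1 : 0 < p.1 := hp.1
    have habs : ‖Complex.polarCoord.symm p‖ = p.1 := by
      rw [Complex.norm_polarCoord_symm, abs_of_pos hp1]
    by_cases hmem : p.1 < S
    · have hball : Complex.polarCoord.symm p ∈ Metric.ball (0:ℂ) S := by
        simp [Metric.mem_ball, Complex.dist_eq, habs, hmem, abs_of_pos hp1]
      have hprod : p ∈ Set.Ioo (0:ℝ) S ×ˢ Set.Ioo (-π) π := ⟨⟨hp1, hmem⟩, hp.2⟩
      simp only [Set.indicator_of_mem hball, Set.indicator_of_mem hprod, habs, smul_eq_mul]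
    · have hball : Complex.polarCoord.symm p ∉ Metric.ball (0:ℂ) S := by
        simp [Metric.mem_ball, Complex.dist_eq, habs, hmem, abs_of_pos hp1]
      have hprod : p ∉ Set.Ioo (0:ℝ) S ×ˢ Set.Ioo (-π) π := fun h => hmem h.1.2
      simp only [Set.indicator_of_notMem hball, Set.indicator_of_notMem hprod, smul_zero]
  rw [integrableOn_congr_fun heq polarCoord.open_target.measurableSet]
  rw [IntegrableOn, integrable_indicator_iff (measurableSet_Ioo.prod measurableSet_Ioo)]
  rw [IntegrableOn, Measure.restrict_restrict (measurableSet_Ioo.prod measurableSet_Ioo),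
    Set.inter_eq_self_of_subset_left hsub]
  have h1 : IntegrableOn (fun r : ℝ => r * Real.log r) (Set.Ioo 0 S) volume :=
    ((Real.continuous_mul_log.continuousOn).integrableOn_compact isCompact_Icc).mono_set
      Set.Ioo_subset_Icc_self
  have h2 : IntegrableOn (fun _ : ℝ => (1:ℝ)) (Set.Ioo (-π) π) volume :=
    integrableOn_const measure_Ioo_lt_top.ne
  have hpm := h1.mul_prod h2
  rw [Measure.prod_restrict, ← Measure.volume_eq_prod] at hpm
  simpa using hpm

lemma integrableOn_log_abs_sub (z : ℂ) {R : ℝ} (hR : 0 < R) :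
    IntegrableOn (fun ζ : ℂ => Real.log (‖ζ - z‖)) (Metric.ball 0 R) volume := by
  have hbig : IntegrableOn (fun ζ : ℂ => Real.log (‖ζ‖))
      (Metric.ball (-z) R) volume := by
    apply (integrableOn_log_abs_ball (S := ‖z‖ + R) (by positivity)).mono_set
    apply Metric.ball_subset_ball'
    have : dist (-z) (0:ℂ) = ‖z‖ := by simp [Complex.dist_eq]
    rw [this]; linarith
  have hmp : MeasurePreserving (fun ζ : ℂ => ζ - z) volume volume := by
    simpa [sub_eq_add_neg] using measurePreserving_add_right (volume : Measure ℂ) (-z)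
  have hemb : MeasurableEmbedding (fun ζ : ℂ => ζ - z) :=
    (MeasurableEquiv.subRight z).measurableEmbedding
  have hpre : (fun ζ : ℂ => ζ - z) ⁻¹' (Metric.ball (-z) R) = Metric.ball 0 R := by
    ext ζ
    simp only [Set.mem_preimage, Metric.mem_ball, Complex.dist_eq]
    constructor
    · intro h; convert h using 2; ring
    · intro h; convert h using 2; ring
  have h := hmp.integrableOn_comp_preimage hemb
    (f := fun ζ : ℂ => Real.log (‖ζ‖)) (s := Metric.ball (-z) R)
  rw [hpre] at h
  exact h.mpr hbig

lemma integrableOn_logFactor {R : ℝ} (hR : 0 < R) (z : ℂ) :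
    IntegrableOn (fun ζ : ℂ => logFactor z ζ) (Metric.ball 0 R) volume := by
  have h1 := integrableOn_log_abs_sub z hR
  have h2 := integrableOn_log_abs_ball hR
  exact h1.sub h2

lemma integral_id_mul_log {b : ℝ} (hb : 0 < b) :
    ∫ r in (0:ℝ)..b, r * Real.log r = b^2/2 * Real.log b - b^2/4 := by
  have hG : ∀ x ∈ Set.Ioo (0:ℝ) b,
      HasDerivAt (fun x : ℝ => x^2/2 * Real.log x - x^2/4) (x * Real.log x) x := by
    intro x hx
    have hx0 : x ≠ 0 := ne_of_gt hx.1
    have h1 : HasDerivAt (fun x : ℝ => x^2/2) x x := by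
      have := (hasDerivAt_pow 2 x).div_const 2
      simpa using this
    have h2 : HasDerivAt Real.log x⁻¹ x := Real.hasDerivAt_log hx0
    have h3 : HasDerivAt (fun x : ℝ => x^2/2 * Real.log x)
        (x * Real.log x + x^2/2 * x⁻¹) x := h1.mul h2
    have h4 : HasDerivAt (fun x : ℝ => x^2/4) (x/2) x := by
      have h := (hasDerivAt_pow 2 x).div_const 4
      simp at h
      exact h.congr_deriv (by ring)
    have := h3.sub h4
    exact this.congr_deriv (by field_simp; ring)
  have hcont : ContinuousOn (fun x : ℝ => x^2/2 * Real.log x - x^2/4) (Set.Icc 0 b) := by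
    have heq : (fun x : ℝ => x^2/2 * Real.log x - x^2/4)
        = fun x : ℝ => x * (x * Real.log x)/2 - x^2/4 := by
      funext x; ring
    rw [heq]
    fun_prop (disch := exact Real.continuous_mul_log)
  have hint : IntervalIntegrable (fun x : ℝ => x * Real.log x) volume 0 b :=
    Real.continuous_mul_log.intervalIntegrable 0 b
  have := intervalIntegral.integral_eq_sub_of_hasDeriv_right_of_le hb.le hcont
    (fun x hx => (hG x hx).hasDerivWithinAt) hint
  rw [this]
  simp

lemma polar_symm_eq_circleMap (r θ : ℝ) :
    Complex.polarCoord.symm (r, θ) = circleMap 0 r θ := by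
  rw [Complex.polarCoord_symm_apply, circleMap_zero, Complex.exp_mul_I]
  push_cast
  ring

lemma inner_integral {r : ℝ} (hr : 0 < r) {z : ℂ} (hne : r ≠ ‖z‖) :
    (∫ θ in Set.Ioo (-π) π,
        r * (Real.log (‖Complex.polarCoord.symm (r, θ) - z‖) - Real.log r))
      = 2*π*(r * (Real.log (max r (‖z‖)) - Real.log r)) := by
  simp_rw [polar_symm_eq_circleMap]
  rw [MeasureTheory.integral_const_mul]
  have h0 : ∀ θ : ℝ, ‖circleMap 0 r θ - z‖ ≠ 0 := by
    intro θ
    have hne' : circleMap 0 r θ - z ≠ 0 := by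
      intro h
      apply hne
      have : circleMap 0 r θ = z := by linear_combination (norm := ring_nf) h
      rw [← this, norm_circleMap_zero, abs_of_pos hr]
    exact (norm_pos_iff.mpr hne').ne'
  have hcont : Continuous fun θ : ℝ => Real.log (‖circleMap 0 r θ - z‖) :=
    (continuous_norm.comp ((continuous_circleMap 0 r).sub continuous_const)).log h0
  rw [MeasureTheory.integral_sub ((hcont.continuousOn).integrableOn_compact isCompact_Icc |>.mono_set Set.Ioo_subset_Icc_self)
    (integrableOn_const measure_Ioo_lt_top.ne)]
  have hmain : (∫ θ in Set.Ioo (-π) π, Real.log (‖circleMap 0 r θ - z‖))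
      = 2*π*Real.log (max r (‖z‖)) := by
    have hIoo : (∫ θ in Set.Ioo (-π) π, Real.log (‖circleMap 0 r θ - z‖))
        = ∫ θ in (-π)..π, Real.log (‖circleMap 0 r θ - z‖) := by
      rw [intervalIntegral.integral_of_le (by linarith [Real.pi_pos]),
        MeasureTheory.integral_Ioc_eq_integral_Ioo]
    rw [hIoo]
    have hper : Function.Periodic
        (fun θ : ℝ => Real.log (‖circleMap 0 r θ - z‖)) (2*π) := by
      intro θ
      simp [periodic_circleMap 0 r θ]
    have hshift := hper.intervalIntegral_add_eq (-π) 0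
    have h1 : -π + 2*π = π := by ring
    rw [h1] at hshift
    rw [hshift, zero_add]
    exact circle_log_avg hr hne
  rw [hmain]
  rw [MeasureTheory.setIntegral_const]
  rw [Real.volume_real_Ioo_of_le (by linarith [Real.pi_pos])]
  have : π - (-π) = 2*π := by ring
  rw [this]
  simp only [smul_eq_mul]
  ring

lemma hsub_prod {R : ℝ} : (Set.Ioo (0:ℝ) R ×ˢ Set.Ioo (-π) π) ⊆ polarCoord.target := by
  rw [polarCoord_target]
  exact Set.prod_mono (Set.Ioo_subset_Ioi_self) le_rfl

lemma heq_polar (z : ℂ) (R : ℝ) : Set.EqOn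
    (fun p : ℝ × ℝ => p.1 • (Metric.ball (0:ℂ) R).indicator
      (fun ζ => logFactor z ζ) (Complex.polarCoord.symm p))
    ((Set.Ioo (0:ℝ) R ×ˢ Set.Ioo (-π) π).indicator
      (fun p : ℝ × ℝ =>
        p.1 * (Real.log (‖Complex.polarCoord.symm p - z‖) - Real.log p.1)))
    polarCoord.target := by
  intro p hp
  rw [polarCoord_target] at hp
  have hp1 : 0 < p.1 := hp.1
  have habs : ‖Complex.polarCoord.symm p‖ = p.1 := by
    rw [Complex.norm_polarCoord_symm, abs_of_pos hp1]
  by_cases hmem : p.1 < R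
  · have hball : Complex.polarCoord.symm p ∈ Metric.ball (0:ℂ) R := by
      simp [Metric.mem_ball, Complex.dist_eq, habs, hmem, abs_of_pos hp1]
    have hprod : p ∈ Set.Ioo (0:ℝ) R ×ˢ Set.Ioo (-π) π := ⟨⟨hp1, hmem⟩, hp.2⟩
    simp only [Set.indicator_of_mem hball, Set.indicator_of_mem hprod, smul_eq_mul,
      logFactor, habs]
  · have hball : Complex.polarCoord.symm p ∉ Metric.ball (0:ℂ) R := by
      simp [Metric.mem_ball, Complex.dist_eq, habs, hmem, abs_of_pos hp1]
    have hprod : p ∉ Set.Ioo (0:ℝ) R ×ˢ Set.Ioo (-π) π := fun h => hmem h.1.2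
    simp only [Set.indicator_of_notMem hball, Set.indicator_of_notMem hprod, smul_zero]

lemma uR_value {R : ℝ} (hR : 0 < R) (z : ℂ) :
    (∫ ζ in Metric.ball (0 : ℂ) R, logFactor z ζ)
      = ∫ r in Set.Ioo (0:ℝ) R,
          2*π*(r * (Real.log (max r (‖z‖)) - Real.log r)) := by
  set f : ℂ → ℝ := (Metric.ball (0:ℂ) R).indicator (fun ζ => logFactor z ζ) with hf
  have hfint : Integrable f volume :=
    (integrable_indicator_iff measurableSet_ball).2 (integrableOn_logFactor hR z)
  have hpolar : IntegrableOn (fun p : ℝ × ℝ => p.1 • f (Complex.polarCoord.symm p))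
      polarCoord.target volume := (integrable_polar_iff f).1 hfint
  have heq := heq_polar z R
  have hint2 : IntegrableOn (fun p : ℝ × ℝ =>
      p.1 * (Real.log (‖Complex.polarCoord.symm p - z‖) - Real.log p.1))
      (Set.Ioo (0:ℝ) R ×ˢ Set.Ioo (-π) π) volume := by
    have h := (integrableOn_congr_fun heq polarCoord.open_target.measurableSet).1 hpolar
    rw [IntegrableOn, integrable_indicator_iff (measurableSet_Ioo.prod measurableSet_Ioo)] at h
    rwa [IntegrableOn, Measure.restrict_restrict (measurableSet_Ioo.prod measurableSet_Ioo),
      Set.inter_eq_self_of_subset_left hsub_prod] at h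
  calc (∫ ζ in Metric.ball (0 : ℂ) R, logFactor z ζ)
      = ∫ ζ, f ζ := by rw [hf, MeasureTheory.integral_indicator measurableSet_ball]
    _ = ∫ p in polarCoord.target, p.1 • f (Complex.polarCoord.symm p) :=
        (Complex.integral_comp_polarCoord_symm f).symm
    _ = ∫ p in polarCoord.target, (Set.Ioo (0:ℝ) R ×ˢ Set.Ioo (-π) π).indicator
          (fun p : ℝ × ℝ =>
            p.1 * (Real.log (‖Complex.polarCoord.symm p - z‖) - Real.log p.1)) p :=
        setIntegral_congr_fun polarCoord.open_target.measurableSet heq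
    _ = ∫ p in (Set.Ioo (0:ℝ) R ×ˢ Set.Ioo (-π) π),
          p.1 * (Real.log (‖Complex.polarCoord.symm p - z‖) - Real.log p.1) := by
        rw [MeasureTheory.setIntegral_indicator (measurableSet_Ioo.prod measurableSet_Ioo),
          Set.inter_comm, Set.inter_eq_self_of_subset_left hsub_prod]
    _ = ∫ r in Set.Ioo (0:ℝ) R, ∫ θ in Set.Ioo (-π) π,
          r * (Real.log (‖Complex.polarCoord.symm (r, θ) - z‖) - Real.log r) :=
        MeasureTheory.setIntegral_prod _ hint2
    _ = ∫ r in Set.Ioo (0:ℝ) R,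
          2*π*(r * (Real.log (max r (‖z‖)) - Real.log r)) := by
        apply setIntegral_congr_ae measurableSet_Ioo
        have hae : ∀ᵐ r : ℝ, r ≠ ‖z‖ := by
          refine ae_iff.mpr ?_
          simpa using (measure_singleton (‖z‖) : (volume : Measure ℝ) _ = 0)
        filter_upwards [hae] with r hr' hrIoo
        exact inner_integral hrIoo.1 hr'

lemma key_eval {b c : ℝ} (hb : 0 < b) :
    (∫ r in (0:ℝ)..b, (2*π*(r * Real.log c) - 2*π*(r * Real.log r)))
      = π * b^2 * Real.log c - π * b^2 * Real.log b + π/2 * b^2 := by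
  have h1 : IntervalIntegrable (fun r : ℝ => 2*π*(r * Real.log c)) volume 0 b :=
    (continuous_const.mul (continuous_id.mul continuous_const)).intervalIntegrable _ _
  have h2 : IntervalIntegrable (fun r : ℝ => 2*π*(r * Real.log r)) volume 0 b :=
    (continuous_const.mul Real.continuous_mul_log).intervalIntegrable _ _
  rw [intervalIntegral.integral_sub h1 h2, intervalIntegral.integral_const_mul,
    intervalIntegral.integral_const_mul, integral_id_mul_log hb]
  have : (∫ r in (0:ℝ)..b, r * Real.log c) = (b^2 - 0^2)/2 * Real.log c := by
    rw [intervalIntegral.integral_mul_const, integral_id]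
  rw [this]
  ring

lemma outer_eval_le {R t : ℝ} (hR : 0 < R) (ht0 : 0 ≤ t) (ht : t ≤ R) :
    (∫ r in Set.Ioo (0:ℝ) R, 2*π*(r * (Real.log (max r t) - Real.log r)))
      = π/2 * t^2 := by
  rcases eq_or_lt_of_le ht0 with h0 | h0
  · have hzero : ∀ r ∈ Set.Ioo (0:ℝ) R,
        2*π*(r * (Real.log (max r t) - Real.log r)) = 0 := by
      intro r hr
      rw [← h0, max_eq_left hr.1.le]
      ring
    rw [setIntegral_congr_fun measurableSet_Ioo hzero]
    simp [← h0]
  · have hHeq : (fun r : ℝ => 2*π*(r * (Real.log (max r t) - Real.log r)))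
        = fun r : ℝ => 2*π*(r * Real.log (max r t)) - 2*π*(r * Real.log r) :=
      funext fun r => by ring
    rw [hHeq, ← MeasureTheory.integral_Ioc_eq_integral_Ioo,
      ← intervalIntegral.integral_of_le hR.le]
    have hcmax : Continuous fun r : ℝ => Real.log (max r t) :=
      (continuous_id.max continuous_const).log
        (fun r => (lt_of_lt_of_le h0 (le_max_right r t)).ne')
    have hG1 : IntervalIntegrable (fun r : ℝ => 2*π*(r * Real.log (max r t))
        - 2*π*(r * Real.log r)) volume 0 t :=
      ((continuous_const.mul (continuous_id.mul hcmax)).sub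
        (continuous_const.mul Real.continuous_mul_log)).intervalIntegrable _ _
    have hG2 : IntervalIntegrable (fun r : ℝ => 2*π*(r * Real.log (max r t))
        - 2*π*(r * Real.log r)) volume t R :=
      ((continuous_const.mul (continuous_id.mul hcmax)).sub
        (continuous_const.mul Real.continuous_mul_log)).intervalIntegrable _ _
    rw [← intervalIntegral.integral_add_adjacent_intervals hG1 hG2]
    have hpart2 : (∫ r in t..R, (2*π*(r * Real.log (max r t)) - 2*π*(r * Real.log r))) = 0 := by
      have : Set.EqOn (fun r : ℝ => 2*π*(r * Real.log (max r t)) - 2*π*(r * Real.log r))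
          (fun _ : ℝ => (0:ℝ)) (Set.uIcc t R) := by
        intro r hr
        rw [Set.uIcc_of_le ht] at hr
        simp only [max_eq_left hr.1]
        ring
      rw [intervalIntegral.integral_congr this]
      simp
    have hpart1 : (∫ r in (0:ℝ)..t, (2*π*(r * Real.log (max r t)) - 2*π*(r * Real.log r)))
        = π/2 * t^2 := by
      have : Set.EqOn (fun r : ℝ => 2*π*(r * Real.log (max r t)) - 2*π*(r * Real.log r))
          (fun r : ℝ => 2*π*(r * Real.log t) - 2*π*(r * Real.log r)) (Set.uIcc 0 t) := by
        intro r hr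
        rw [Set.uIcc_of_le h0.le] at hr
        simp only [max_eq_right hr.2]
      rw [intervalIntegral.integral_congr this, key_eval h0]
      ring
    rw [hpart1, hpart2]
    ring

lemma outer_eval_gt {R t : ℝ} (hR : 0 < R) (ht : R < t) :
    (∫ r in Set.Ioo (0:ℝ) R, 2*π*(r * (Real.log (max r t) - Real.log r)))
      = π * R^2 * Real.log t - π * R^2 * Real.log R + π/2 * R^2 := by
  have hHeq : (fun r : ℝ => 2*π*(r * (Real.log (max r t) - Real.log r)))
      = fun r : ℝ => 2*π*(r * Real.log (max r t)) - 2*π*(r * Real.log r) :=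
    funext fun r => by ring
  rw [hHeq, ← MeasureTheory.integral_Ioc_eq_integral_Ioo,
    ← intervalIntegral.integral_of_le hR.le]
  have : Set.EqOn (fun r : ℝ => 2*π*(r * Real.log (max r t)) - 2*π*(r * Real.log r))
      (fun r : ℝ => 2*π*(r * Real.log t) - 2*π*(r * Real.log r)) (Set.uIcc 0 R) := by
    intro r hr
    rw [Set.uIcc_of_le hR.le] at hr
    simp only [max_eq_right (le_of_lt (lt_of_le_of_lt hr.2 ht))]
  rw [intervalIntegral.integral_congr this, key_eval hR]

end Aux

open scoped Real in
/-- `u_R(z) = ∫_{|ζ|<R} log|1 - z/ζ| dm(ζ)` equals `(π/2)|z|²` for `|z| ≤ R` and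
`πR² log|z| - πR² log R + (π/2)R²` for `|z| > R`; moreover `u_R(z) < (π/2)|z|²` for
`|z| > R`. -/
theorem uR_integral (R : ℝ) (hR : 0 < R) (z : ℂ) :
    IntegrableOn (fun ζ : ℂ => logFactor z ζ) (Metric.ball (0 : ℂ) R) volume ∧
    (‖z‖ ≤ R →
      (∫ ζ in Metric.ball (0 : ℂ) R, logFactor z ζ) =
        Real.pi / 2 * ‖z‖ ^ 2) ∧
    (R < ‖z‖ →
      (∫ ζ in Metric.ball (0 : ℂ) R, logFactor z ζ) =
        Real.pi * R ^ 2 * Real.log (‖z‖) - Real.pi * R ^ 2 * Real.log R +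
          Real.pi / 2 * R ^ 2) ∧
    (R < ‖z‖ →
      (∫ ζ in Metric.ball (0 : ℂ) R, logFactor z ζ) <
        Real.pi / 2 * ‖z‖ ^ 2) := by
  refine ⟨integrableOn_logFactor hR z, ?_, ?_, ?_⟩
  · intro hle
    rw [uR_value hR z, outer_eval_le hR (norm_nonneg z) hle]
  · intro hgt
    rw [uR_value hR z, outer_eval_gt hR hgt]
  · intro hgt
    rw [uR_value hR z, outer_eval_gt hR hgt]
    set t := ‖z‖ with htdef
    have ht0 : 0 < t := lt_trans hR hgt
    have hx : (1:ℝ) < (t/R)^2 := by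
      have h1 : 1 < t/R := (one_lt_div hR).mpr hgt
      nlinarith
    have hlog : Real.log ((t/R)^2) < (t/R)^2 - 1 :=
      Real.log_lt_sub_one_of_pos (by positivity) (ne_of_gt hx)
    have hlogeq : Real.log ((t/R)^2) = 2*(Real.log t - Real.log R) := by
      rw [Real.log_pow, Real.log_div (ne_of_gt ht0) (ne_of_gt hR)]
      push_cast; ring
    have hsq : ((t/R)^2 - 1) = (t^2 - R^2)/R^2 := by field_simp
    rw [hlogeq, hsq] at hlog
    have hmul := mul_lt_mul_of_pos_left hlog (show (0:ℝ) < π*R^2/2 by positivity)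
    have hL : π*R^2/2 * (2*(Real.log t - Real.log R))
        = π * R^2 * Real.log t - π * R^2 * Real.log R := by ring
    have hRside : π*R^2/2 * ((t^2 - R^2)/R^2) = π/2*t^2 - π/2*R^2 := by
      field_simp
    rw [hL, hRside] at hmul
    linarith
end
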